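/- Let F be a limit fractal and d the Connes metric of the parent-child spectral triple. Then ‖x−y‖ ≤ d(x,y) for all x,y ∈ F; moreover the identity map ι : (F, ‖·‖) → (F, d) is a homeomorphism. -/

import Mathlib

open Filter MeasureTheory Set

/-- Composition of the maps `w (k, σ k)` along a word `σ` of length `n`. -/
def compWord {X : Type*} (w : ℕ → ℕ → X → X) : (n : ℕ) → (Fin n → ℕ) → X → X
  | 0, _, x => x
  | n + 1, σ, x => compWord w n (fun k => σ k.castSucc) (w n (σ (Fin.last n)) x)

/-- The limit fractal determined by the contractions `w n j`, `j < p n`. -/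
def limitSet {X : Type*} (w : ℕ → ℕ → X → X) (p : ℕ → ℕ) (C : Set X) : Set X :=
  ⋂ n, ⋃ (σ : Fin n → ℕ) (_ : ∀ k, σ k < p k), compWord w n σ '' C

/-- A function is admissible for the parent–child Dirac operator `D`
(`‖[D,f]‖ ≤ 1`) iff its difference quotients over all parent–child pairs
`(x_σ, x_{σ·i})` are bounded by `1`. -/
def DiracAdmissible {N : ℕ}
    (w : ℕ → ℕ → EuclideanSpace ℝ (Fin N) → EuclideanSpace ℝ (Fin N))
    (p : ℕ → ℕ) (x₀ : EuclideanSpace ℝ (Fin N))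
    (f : EuclideanSpace ℝ (Fin N) → ℝ) : Prop :=
  Continuous f ∧
    ∀ (n : ℕ) (σ : Fin n → ℕ), (∀ k, σ k < p k) → ∀ i < p n,
      |f (compWord w n σ x₀) - f (compWord w (n + 1) (Fin.snoc σ i) x₀)| ≤
        dist (compWord w n σ x₀) (compWord w (n + 1) (Fin.snoc σ i) x₀)

/-- Connes distance of the parent–child spectral triple:
`d(x,y) = sup {|f x − f y| : ‖[D,f]‖ ≤ 1}`. -/
noncomputable def connesDist {N : ℕ}
    (w : ℕ → ℕ → EuclideanSpace ℝ (Fin N) → EuclideanSpace ℝ (Fin N))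
    (p : ℕ → ℕ) (x₀ x y : EuclideanSpace ℝ (Fin N)) : ℝ :=
  sSup {t | ∃ f : EuclideanSpace ℝ (Fin N) → ℝ,
    DiracAdmissible w p x₀ f ∧ t = |f x - f y|}

section Aux

variable {N : ℕ}
variable {w : ℕ → ℕ → EuclideanSpace ℝ (Fin N) → EuclideanSpace ℝ (Fin N)}
variable {p : ℕ → ℕ} {lam : ℕ → ℕ → ℝ}

lemma compWord_snoc (n : ℕ) (σ : Fin n → ℕ) (i : ℕ) (x : EuclideanSpace ℝ (Fin N)) :
    compWord w (n+1) (Fin.snoc σ i) x = compWord w n σ (w n i x) := by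
  show compWord w n (fun k => (Fin.snoc σ i : Fin (n+1) → ℕ) k.castSucc)
      (w n ((Fin.snoc σ i : Fin (n+1) → ℕ) (Fin.last n)) x) = _
  simp [Fin.snoc_castSucc, Fin.snoc_last]

lemma restrict_succ (ω : ℕ → ℕ) (n : ℕ) :
    (fun k : Fin (n+1) => ω k) = Fin.snoc (fun k : Fin n => ω k) (ω n) := by
  funext k
  induction k using Fin.lastCases with
  | last => simp
  | cast k => simp [Fin.snoc_castSucc]

lemma dist_compWord
    (hsim : ∀ n i, i < p n → ∀ a b, dist (w n i a) (w n i b) = lam n i * dist a b)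
    (n : ℕ) (σ : Fin n → ℕ) (hσ : ∀ k, σ k < p k)
    (a b : EuclideanSpace ℝ (Fin N)) :
    dist (compWord w n σ a) (compWord w n σ b) = (∏ k : Fin n, lam k (σ k)) * dist a b := by
  induction n generalizing a b with
  | zero => simp [compWord]
  | succ n ih =>
    show dist (compWord w n _ (w n (σ (Fin.last n)) a)) (compWord w n _ (w n (σ (Fin.last n)) b)) = _
    rw [ih (fun k => σ k.castSucc) (fun k => by simpa using hσ k.castSucc),
      hsim n (σ (Fin.last n)) (hσ (Fin.last n)) a b, Fin.prod_univ_castSucc]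
    simp only [Fin.coe_castSucc, Fin.val_last]
    ring

lemma prod_lam_le {c : ℝ} (_hc0 : 0 < c)
    (hlam : ∀ n i, i < p n → lam n i ∈ Set.Ioo (0 : ℝ) 1)
    (hcb : ∀ n i, i < p n → lam n i ≤ c)
    (n : ℕ) (σ : Fin n → ℕ) (hσ : ∀ k, σ k < p k) :
    0 ≤ (∏ k : Fin n, lam k (σ k)) ∧ (∏ k : Fin n, lam k (σ k)) ≤ c ^ n := by
  constructor
  · exact Finset.prod_nonneg fun k _ => (hlam k (σ k) (hσ k)).1.le
  · calc (∏ k : Fin n, lam k (σ k)) ≤ ∏ _k : Fin n, c :=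
        Finset.prod_le_prod (fun k _ => (hlam k (σ k) (hσ k)).1.le)
          (fun k _ => hcb k (σ k) (hσ k))
    _ = c ^ n := by simp

lemma continuous_w
    (hsim : ∀ n i, i < p n → ∀ a b, dist (w n i a) (w n i b) = lam n i * dist a b)
    (hlam : ∀ n i, i < p n → lam n i ∈ Set.Ioo (0 : ℝ) 1)
    (n i : ℕ) (hi : i < p n) : Continuous (w n i) := by
  have : LipschitzWith (Real.toNNReal (lam n i)) (w n i) := by
    apply LipschitzWith.of_dist_le_mul
    intro a b
    rw [hsim n i hi a b, Real.coe_toNNReal _ (hlam n i hi).1.le]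
  exact this.continuous

lemma continuous_compWord
    (hsim : ∀ n i, i < p n → ∀ a b, dist (w n i a) (w n i b) = lam n i * dist a b)
    (hlam : ∀ n i, i < p n → lam n i ∈ Set.Ioo (0 : ℝ) 1)
    (n : ℕ) (σ : Fin n → ℕ) (hσ : ∀ k, σ k < p k) :
    Continuous (compWord w n σ) := by
  induction n with
  | zero => exact continuous_id
  | succ n ih =>
    show Continuous (fun x => compWord w n _ (w n (σ (Fin.last n)) x))
    exact (ih (fun k => σ k.castSucc) (fun k => by simpa using hσ k.castSucc)).comp
      (continuous_w hsim hlam n (σ (Fin.last n)) (hσ (Fin.last n)))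

end Aux
section Aux2

variable {N : ℕ}
variable {w : ℕ → ℕ → EuclideanSpace ℝ (Fin N) → EuclideanSpace ℝ (Fin N)}
variable {p : ℕ → ℕ} {lam : ℕ → ℕ → ℝ} {V : Set (EuclideanSpace ℝ (Fin N))}

/-- the `j`-th cell along an infinite word. -/
def cellOf (w : ℕ → ℕ → EuclideanSpace ℝ (Fin N) → EuclideanSpace ℝ (Fin N))
    (C : Set (EuclideanSpace ℝ (Fin N))) (ω : ℕ → ℕ) (j : ℕ) :
    Set (EuclideanSpace ℝ (Fin N)) :=
  compWord w j (fun k : Fin j => ω k) '' C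

lemma cellOf_congr {C : Set (EuclideanSpace ℝ (Fin N))} {ω ω' : ℕ → ℕ} {j : ℕ}
    (h : ∀ k < j, ω k = ω' k) : cellOf w C ω j = cellOf w C ω' j := by
  unfold cellOf
  rw [show (fun k : Fin j => ω ↑k) = (fun k : Fin j => ω' ↑k) from
    funext fun k => h k k.isLt]

lemma w_image_closure
    (hsim : ∀ n i, i < p n → ∀ a b, dist (w n i a) (w n i b) = lam n i * dist a b)
    (hlam : ∀ n i, i < p n → lam n i ∈ Set.Ioo (0 : ℝ) 1)
    (hmaps : ∀ n i, i < p n → w n i '' V ⊆ V)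
    (n i : ℕ) (hi : i < p n) : w n i '' closure V ⊆ closure V := by
  refine subset_trans ?_ (closure_mono (hmaps n i hi))
  exact (continuous_w hsim hlam n i hi).continuousOn.image_closure.trans subset_rfl
    |>.trans (subset_rfl)

lemma cellOf_succ_subset
    (hsim : ∀ n i, i < p n → ∀ a b, dist (w n i a) (w n i b) = lam n i * dist a b)
    (hlam : ∀ n i, i < p n → lam n i ∈ Set.Ioo (0 : ℝ) 1)
    (hmaps : ∀ n i, i < p n → w n i '' V ⊆ V)
    (ω : ℕ → ℕ) (hω : ∀ k, ω k < p k) (j : ℕ) :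
    cellOf w (closure V) ω (j+1) ⊆ cellOf w (closure V) ω j := by
  unfold cellOf
  rw [restrict_succ]
  intro x hx
  obtain ⟨b, hb, rfl⟩ := hx
  rw [compWord_snoc]
  exact ⟨w j (ω j) b, w_image_closure hsim hlam hmaps j (ω j) (hω j) ⟨b, hb, rfl⟩, rfl⟩

lemma cellOf_mono
    (hsim : ∀ n i, i < p n → ∀ a b, dist (w n i a) (w n i b) = lam n i * dist a b)
    (hlam : ∀ n i, i < p n → lam n i ∈ Set.Ioo (0 : ℝ) 1)
    (hmaps : ∀ n i, i < p n → w n i '' V ⊆ V)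
    (ω : ℕ → ℕ) (hω : ∀ k, ω k < p k) {j j' : ℕ} (hj : j ≤ j') :
    cellOf w (closure V) ω j' ⊆ cellOf w (closure V) ω j := by
  induction j' with
  | zero => simp at hj; subst hj; exact subset_rfl
  | succ j' ih =>
    rcases Nat.lt_or_ge j (j'+1) with h | h
    · exact (cellOf_succ_subset hsim hlam hmaps ω hω j').trans (ih (Nat.lt_succ_iff.mp h))
    · have : j = j' + 1 := le_antisymm hj h
      subst this; exact subset_rfl

end Aux2
section Aux3

variable {N : ℕ}
variable {w : ℕ → ℕ → EuclideanSpace ℝ (Fin N) → EuclideanSpace ℝ (Fin N)}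
variable {p : ℕ → ℕ} {lam : ℕ → ℕ → ℝ} {V : Set (EuclideanSpace ℝ (Fin N))}

/-- union of level-`j` cells whose word extends a given level-`m` prefix. -/
def Dlev (w : ℕ → ℕ → EuclideanSpace ℝ (Fin N) → EuclideanSpace ℝ (Fin N))
    (p : ℕ → ℕ) (C : Set (EuclideanSpace ℝ (Fin N))) {m : ℕ} (r : Fin m → ℕ) (j : ℕ) :
    Set (EuclideanSpace ℝ (Fin N)) :=
  ⋃ (ω : ℕ → ℕ) (_ : (∀ k, ω k < p k) ∧ ∀ k : Fin m, ω k = r k), cellOf w C ω j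

lemma isClosed_Dlev
    (hsim : ∀ n i, i < p n → ∀ a b, dist (w n i a) (w n i b) = lam n i * dist a b)
    (hlam : ∀ n i, i < p n → lam n i ∈ Set.Ioo (0 : ℝ) 1)
    (hVbdd : Bornology.IsBounded V)
    {m : ℕ} (r : Fin m → ℕ) (j : ℕ) : IsClosed (Dlev w p (closure V) r j) := by
  have hC : IsCompact (closure V) := hVbdd.isCompact_closure
  have : Dlev w p (closure V) r j =
      ⋃ s ∈ (fun ω : ℕ → ℕ => fun k : Fin j => ω k) ''
        {ω | (∀ k, ω k < p k) ∧ ∀ k : Fin m, ω k = r k},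
        compWord w j s '' closure V := by
    rw [Set.biUnion_image]
    rfl
  rw [this]
  apply Set.Finite.isClosed_biUnion
  · apply Set.Finite.subset (Finset.finite_toSet
      (Fintype.piFinset fun k : Fin j => Finset.range (p k)))
    rintro s ⟨ω, hω, rfl⟩
    simp only [Finset.mem_coe, Fintype.mem_piFinset, Finset.mem_range]
    exact fun k => hω.1 k
  · rintro s ⟨ω, hω, rfl⟩
    exact ((hC.image (continuous_compWord hsim hlam j _ fun k => hω.1 k)).isClosed)

end Aux3
section Aux4

variable {N : ℕ}
variable {w : ℕ → ℕ → EuclideanSpace ℝ (Fin N) → EuclideanSpace ℝ (Fin N)}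
variable {p : ℕ → ℕ} {lam : ℕ → ℕ → ℝ} {V : Set (EuclideanSpace ℝ (Fin N))}

lemma konig
    (hp : ∀ n, 1 ≤ p n)
    (hsim : ∀ n i, i < p n → ∀ a b, dist (w n i a) (w n i b) = lam n i * dist a b)
    (hlam : ∀ n i, i < p n → lam n i ∈ Set.Ioo (0 : ℝ) 1)
    (hmaps : ∀ n i, i < p n → w n i '' V ⊆ V)
    (a : EuclideanSpace ℝ (Fin N)) (m : ℕ) (r : Fin m → ℕ)
    (hyp : ∀ j, ∃ ω : ℕ → ℕ, (∀ k, ω k < p k) ∧ (∀ k : Fin m, ω k = r k) ∧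
      a ∈ cellOf w (closure V) ω j) :
    ∃ ω : ℕ → ℕ, (∀ k, ω k < p k) ∧ (∀ k : Fin m, ω k = r k) ∧
      ∀ j, a ∈ cellOf w (closure V) ω j := by
  classical
  set C := closure V with hCdef
  set Q : (ℕ → ℕ) → ℕ → Prop := fun ω m' => (∀ k, ω k < p k) ∧
    ∀ j, m' ≤ j → ∃ ω', (∀ k, ω' k < p k) ∧ (∀ k < m', ω' k = ω k) ∧
      a ∈ cellOf w C ω' j with hQdef
  obtain ⟨ω0, hω0v, hω0m, -⟩ := hyp 0
  set ωb : ℕ → ℕ := fun k => if h : k < m then r ⟨k, h⟩ else 0 with hωb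
  have hQbase : Q ωb m := by
    constructor
    · intro k
      by_cases h : k < m
      · simp only [hωb, dif_pos h]
        rw [← hω0m ⟨k, h⟩]; exact hω0v k
      · simp only [hωb, dif_neg h]; exact hp k
    · intro j _
      obtain ⟨ω, h1, h2, h3⟩ := hyp j
      exact ⟨ω, h1, fun k hk => by simp only [hωb, dif_pos hk]; exact h2 ⟨k, hk⟩, h3⟩
  have hstep : ∀ m' (ω : ℕ → ℕ), Q ω m' →
      ∃ ω2, (∀ k < m', ω2 k = ω k) ∧ Q ω2 (m' + 1) := by
    intro m' ω hQω
    obtain ⟨hv, hQ⟩ := hQω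
    have claim : ∃ i, i < p m' ∧ ∀ j, m' + 1 ≤ j → ∃ ω', (∀ k, ω' k < p k) ∧
        (∀ k < m', ω' k = ω k) ∧ ω' m' = i ∧ a ∈ cellOf w C ω' j := by
      by_contra hno
      push_neg at hno
      choose g hg1 hg2 using hno
      set g' : ℕ → ℕ := fun i => if h : i < p m' then g i h else 0 with hg'
      set J : ℕ := max (m' + 1) ((Finset.range (p m')).sup g') with hJ
      obtain ⟨ω', h1, h2, h3⟩ := hQ J (le_trans (Nat.le_succ m') (le_max_left _ _))
      have hi : ω' m' < p m' := h1 m'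
      have hjle : g (ω' m') hi ≤ J := by
        calc g (ω' m') hi = g' (ω' m') := by simp only [hg', dif_pos hi]
        _ ≤ (Finset.range (p m')).sup g' := Finset.le_sup (Finset.mem_range.mpr hi)
        _ ≤ J := le_max_right _ _
      have hmem : a ∈ cellOf w C ω' (g (ω' m') hi) := by
        rw [hCdef]
        exact cellOf_mono hsim hlam hmaps ω' h1 hjle h3
      exact hg2 (ω' m') hi ω' h1 h2 rfl hmem
    obtain ⟨i, hi, hcl⟩ := claim
    refine ⟨Function.update ω m' i, fun k hk => Function.update_of_ne (Nat.ne_of_lt hk) _ _, ?_, ?_⟩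
    · intro k
      by_cases h : k = m'
      · subst h; rw [Function.update_self]; exact hi
      · rw [Function.update_of_ne h]; exact hv k
    · intro j hj
      obtain ⟨ω', h1, h2, h3, h4⟩ := hcl j hj
      refine ⟨ω', h1, fun k hk => ?_, h4⟩
      rcases Nat.lt_or_ge k m' with h | h
      · rw [Function.update_of_ne (Nat.ne_of_lt h)]; exact h2 k h
      · have : k = m' := by omega
        subst this; rw [Function.update_self]; exact h3
  let T : ℕ → Type _ := fun t => {ωq : ℕ → ℕ // Q ωq (m + t)}
  let step : ∀ t, T t → T (t + 1) := fun t prev =>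
    ⟨Classical.choose (hstep (m + t) prev.1 prev.2),
      (Classical.choose_spec (hstep (m + t) prev.1 prev.2)).2⟩
  let F : ∀ t, T t := fun t => Nat.rec ⟨ωb, hQbase⟩ step t
  have hcoh : ∀ t, ∀ k < m + t, (F (t + 1)).1 k = (F t).1 k := fun t =>
    (Classical.choose_spec (hstep (m + t) (F t).1 (F t).2)).1
  have hcoh2 : ∀ t t', t ≤ t' → ∀ k < m + t, (F t').1 k = (F t).1 k := by
    intro t t' ht
    induction t' , ht using Nat.le_induction with
    | base => intro k _; rfl
    | succ t' ht ih =>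
      intro k hk
      rw [hcoh t' k (by omega)]
      exact ih k hk
  set ωs : ℕ → ℕ := fun k => (F (k + 1)).1 k with hωs
  have key : ∀ t, ∀ k, k < m + t → ωs k = (F t).1 k := by
    intro t k hk
    rcases le_total (k + 1) t with h | h
    · exact (hcoh2 (k + 1) t h k (by omega)).symm
    · exact hcoh2 t (k + 1) h k hk
  refine ⟨ωs, fun k => (F (k + 1)).2.1 k, ?_, ?_⟩
  · intro k
    rw [key 0 k (by simpa using k.isLt)]
    show ωb k = r k
    simp only [hωb, dif_pos k.isLt]
  · intro j
    obtain ⟨ω', h1, h2, h3⟩ := (F j).2.2 (m + j) le_rfl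
    have h4 : a ∈ cellOf w C ω' j :=
      cellOf_mono hsim hlam hmaps ω' h1 (Nat.le_add_left j m) h3
    have : cellOf w C ω' j = cellOf w C ωs j := by
      apply cellOf_congr
      intro k hk
      rw [h2 k (by omega), key j k (by omega)]
    rwa [this] at h4
end Aux4
section Aux5

variable {N : ℕ}
variable {w : ℕ → ℕ → EuclideanSpace ℝ (Fin N) → EuclideanSpace ℝ (Fin N)}
variable {p : ℕ → ℕ} {lam : ℕ → ℕ → ℝ} {V : Set (EuclideanSpace ℝ (Fin N))}

/-- A function is admissible for the parent–child Dirac operator `D` -/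
lemma chainBound
    (hsim : ∀ n i, i < p n → ∀ a b, dist (w n i a) (w n i b) = lam n i * dist a b)
    (hlam : ∀ n i, i < p n → lam n i ∈ Set.Ioo (0 : ℝ) 1)
    (hmaps : ∀ n i, i < p n → w n i '' V ⊆ V)
    {x₀ : EuclideanSpace ℝ (Fin N)} (hx₀ : x₀ ∈ V)
    {c D : ℝ} (hc : 0 < c) (hc1 : c < 1)
    (hcb : ∀ n i, i < p n → lam n i ≤ c) (hD0 : 0 ≤ D)
    (hD : ∀ a b : EuclideanSpace ℝ (Fin N), a ∈ closure V → b ∈ closure V → dist a b ≤ D)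
    {f : EuclideanSpace ℝ (Fin N) → ℝ} (hf : DiracAdmissible w p x₀ f)
    {a : EuclideanSpace ℝ (Fin N)} {ω : ℕ → ℕ} (hωv : ∀ k, ω k < p k)
    (hωc : ∀ j, a ∈ cellOf w (closure V) ω j) (n : ℕ) :
    |f a - f (compWord w n (fun k : Fin n => ω k) x₀)| ≤ D * c ^ n * (1 - c)⁻¹ := by
  have hx₀C : x₀ ∈ closure V := subset_closure hx₀
  set Y : ℕ → EuclideanSpace ℝ (Fin N) := fun j => compWord w j (fun k : Fin j => ω k) x₀
    with hY
  have hval : ∀ j, ∀ k : Fin j, ω (k : ℕ) < p (k : ℕ) := fun j k => hωv k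
  have h1c : (0:ℝ) < 1 - c := by linarith
  have hwx : ∀ j, w j (ω j) x₀ ∈ closure V := fun j =>
    subset_closure (hmaps j _ (hωv j) ⟨x₀, hx₀, rfl⟩)
  have hprod : ∀ j, 0 ≤ (∏ k : Fin j, lam k (ω k)) ∧ (∏ k : Fin j, lam k (ω k)) ≤ c ^ j :=
    fun j => prod_lam_le hc hlam hcb j _ (hval j)
  have hdd : ∀ j (b b' : EuclideanSpace ℝ (Fin N)), b ∈ closure V → b' ∈ closure V →
      dist (compWord w j (fun k : Fin j => ω k) b) (compWord w j (fun k : Fin j => ω k) b')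
        ≤ c ^ j * D := by
    intro j b b' hb hb'
    rw [dist_compWord hsim j _ (hval j)]
    exact mul_le_mul (hprod j).2 (hD b b' hb hb') dist_nonneg (pow_nonneg hc.le j)
  have hstep1 : ∀ j, dist (Y j) (Y (j+1)) ≤ c ^ j * D := by
    intro j
    show dist (compWord w j _ x₀) (compWord w (j+1) (fun k : Fin (j+1) => ω k) x₀) ≤ _
    rw [restrict_succ ω j, compWord_snoc]
    exact hdd j x₀ _ hx₀C (hwx j)
  have hstepf : ∀ j, |f (Y j) - f (Y (j+1))| ≤ c ^ j * D := by
    intro j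
    have h2 := hf.2 j (fun k : Fin j => ω k) (hval j) (ω j) (hωv j)
    rw [← restrict_succ ω j] at h2
    exact h2.trans (hstep1 j)
  have geo : ∀ t : ℕ, (∑ k ∈ Finset.range t, c ^ k) ≤ (1 - c)⁻¹ := by
    intro t
    rw [geom_sum_eq hc1.ne t]
    have : (c ^ t - 1) / (c - 1) = (1 - c ^ t) / (1 - c) := by
      rw [← neg_div_neg_eq]; ring_nf
    rw [this, inv_eq_one_div]
    exact (div_le_div_iff_of_pos_right h1c).mpr (by nlinarith [pow_nonneg hc.le t])
  have tele : ∀ n' m', n' ≤ m' → |f (Y n') - f (Y m')| ≤ ∑ k ∈ Finset.Ico n' m', c ^ k * D := by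
    intro n' m' hm'
    induction m', hm' using Nat.le_induction with
    | base => simp
    | succ m' hm' ih =>
      calc |f (Y n') - f (Y (m'+1))| ≤ |f (Y n') - f (Y m')| + |f (Y m') - f (Y (m'+1))| :=
            abs_sub_le _ _ _
      _ ≤ (∑ k ∈ Finset.Ico n' m', c ^ k * D) + c ^ m' * D := add_le_add ih (hstepf m')
      _ = ∑ k ∈ Finset.Ico n' (m'+1), c ^ k * D := (Finset.sum_Ico_succ_top hm' _).symm
  have sumbd : ∀ n' m', n' ≤ m' → (∑ k ∈ Finset.Ico n' m', c ^ k * D) ≤ D * c ^ n' * (1 - c)⁻¹ := by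
    intro n' m' hm'
    rw [← Finset.sum_mul]
    have h1 : (∑ k ∈ Finset.Ico n' m', c ^ k) = c ^ n' * ∑ k ∈ Finset.range (m' - n'), c ^ k := by
      rw [Finset.sum_Ico_eq_sum_range, Finset.mul_sum]
      exact Finset.sum_congr rfl fun k _ => by rw [pow_add]
    rw [h1]
    calc c ^ n' * (∑ k ∈ Finset.range (m' - n'), c ^ k) * D
        ≤ c ^ n' * (1 - c)⁻¹ * D := by
          apply mul_le_mul_of_nonneg_right _ hD0
          exact mul_le_mul_of_nonneg_left (geo _) (pow_nonneg hc.le n')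
    _ = D * c ^ n' * (1 - c)⁻¹ := by ring
  have hdista : ∀ j, dist (Y j) a ≤ c ^ j * D := by
    intro j
    obtain ⟨b, hb, hab⟩ := hωc j
    rw [dist_comm, ← hab]
    exact hdd j b x₀ hb hx₀C
  have hconv : Filter.Tendsto Y Filter.atTop (nhds a) := by
    apply tendsto_iff_dist_tendsto_zero.mpr
    apply squeeze_zero (fun _ => dist_nonneg) hdista
    have := (tendsto_pow_atTop_nhds_zero_of_lt_one hc.le hc1).mul_const D
    simpa using this
  have hft : Filter.Tendsto (fun m' => |f (Y n) - f (Y m')|) Filter.atTop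
      (nhds |f (Y n) - f a|) := by
    exact ((tendsto_const_nhds.sub ((hf.1.tendsto a).comp hconv)).abs)
  have hle : |f (Y n) - f a| ≤ D * c ^ n * (1 - c)⁻¹ := by
    apply le_of_tendsto hft
    filter_upwards [Filter.eventually_ge_atTop n] with m' hm'
    exact (tele n m' hm').trans (sumbd n m' hm')
  rw [abs_sub_comm] at hle
  exact hle

end Aux5

/-- On a limit fractal the Connes metric `d` of the parent–child triple dominates
the Euclidean distance, and the identity `(F, ‖·‖) → (F, d)` is a homeomorphism
(stated via sequential convergence). -/
theorem stmt16 {N : ℕ} (hN : 0 < N)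
    (w : ℕ → ℕ → EuclideanSpace ℝ (Fin N) → EuclideanSpace ℝ (Fin N))
    (p : ℕ → ℕ) (hp : ∀ n, 1 ≤ p n)
    (lam : ℕ → ℕ → ℝ) (hlam : ∀ n i, i < p n → lam n i ∈ Set.Ioo (0 : ℝ) 1)
    (hsup : ∃ c : ℝ, c < 1 ∧ ∀ n i, i < p n → lam n i ≤ c)
    (hsim : ∀ n i, i < p n → ∀ a b, dist (w n i a) (w n i b) = lam n i * dist a b)
    (V : Set (EuclideanSpace ℝ (Fin N)))
    (hVopen : IsOpen V) (hVbdd : Bornology.IsBounded V) (hVne : V.Nonempty)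
    (hmaps : ∀ n i, i < p n → w n i '' V ⊆ V)
    (hdisj : ∀ n i j, i < p n → j < p n → i ≠ j → Disjoint (w n i '' V) (w n j '' V))
    (x₀ : EuclideanSpace ℝ (Fin N)) (hx₀ : x₀ ∈ V) :
    (∀ x ∈ limitSet w p (closure V), ∀ y ∈ limitSet w p (closure V),
      dist x y ≤ connesDist w p x₀ x y) ∧
    (∀ x ∈ limitSet w p (closure V), ∀ u : ℕ → EuclideanSpace ℝ (Fin N),
      (∀ n, u n ∈ limitSet w p (closure V)) →
      (Tendsto (fun n => dist (u n) x) atTop (nhds 0) ↔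
        Tendsto (fun n => connesDist w p x₀ (u n) x) atTop (nhds 0))) := by
  classical
  obtain ⟨c, hc1, hcb⟩ := hsup
  have hc0 : 0 < c := lt_of_lt_of_le (hlam 0 0 (hp 0)).1 (hcb 0 0 (hp 0))
  have hx₀C : x₀ ∈ closure V := subset_closure hx₀
  obtain ⟨D, hDb⟩ := Metric.isBounded_iff.mp hVbdd.closure
  have hD' : ∀ a b : EuclideanSpace ℝ (Fin N), a ∈ closure V → b ∈ closure V →
      dist a b ≤ D := fun a b ha hb => hDb ha hb
  have hD0 : 0 ≤ D := by simpa using hD' x₀ x₀ hx₀C hx₀C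
  have h1c : (0:ℝ) < 1 - c := by linarith
  -- every point of the limit set follows an infinite word
  have hword : ∀ a ∈ limitSet w p (closure V), ∃ ω : ℕ → ℕ, (∀ k, ω k < p k) ∧
      ∀ j, a ∈ cellOf w (closure V) ω j := by
    intro a ha
    simp only [limitSet, Set.mem_iInter, Set.mem_iUnion] at ha
    have hyp : ∀ j, ∃ ω : ℕ → ℕ, (∀ k, ω k < p k) ∧
        (∀ k : Fin 0, ω (k:ℕ) = (Fin.elim0 : Fin 0 → ℕ) k) ∧
        a ∈ cellOf w (closure V) ω j := by
      intro j
      obtain ⟨σ, hσv, hmem⟩ := ha j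
      refine ⟨fun k => if h : k < j then σ ⟨k, h⟩ else 0, ?_, fun k => k.elim0, ?_⟩
      · intro k
        by_cases h : k < j
        · simpa [dif_pos h] using hσv ⟨k, h⟩
        · simpa [dif_neg h] using Nat.lt_of_lt_of_le Nat.zero_lt_one (hp k)
      · show a ∈ compWord w j _ '' closure V
        have : (fun k : Fin j => if h : (k:ℕ) < j then σ ⟨k, h⟩ else 0) = σ := by
          funext k; simp [k.isLt]
        rw [this]
        exact hmem
    obtain ⟨ω, h1, _, h3⟩ := konig hp hsim hlam hmaps a 0 Fin.elim0 hyp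
    exact ⟨ω, h1, h3⟩
  -- chain bound specialisations
  have hCB := fun (f : EuclideanSpace ℝ (Fin N) → ℝ) (hf : DiracAdmissible w p x₀ f)
      (a : EuclideanSpace ℝ (Fin N)) (ω : ℕ → ℕ) (hωv : ∀ k, ω k < p k)
      (hωc : ∀ j, a ∈ cellOf w (closure V) ω j) (n : ℕ) =>
    chainBound hsim hlam hmaps hx₀ hc0 hc1 hcb hD0 hD' hf hωv hωc n
  have hfx₀ : ∀ f, DiracAdmissible w p x₀ f → ∀ a ∈ limitSet w p (closure V),
      |f a - f x₀| ≤ D * (1 - c)⁻¹ := by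
    intro f hf a ha
    obtain ⟨ω, h1, h2⟩ := hword a ha
    have := hCB f hf a ω h1 h2 0
    simpa [compWord] using this
  -- the admissible set always contains 0
  have h0mem : ∀ x y : EuclideanSpace ℝ (Fin N),
      (0:ℝ) ∈ {t | ∃ f : EuclideanSpace ℝ (Fin N) → ℝ,
        DiracAdmissible w p x₀ f ∧ t = |f x - f y|} := by
    intro x y
    exact ⟨fun _ => 0, ⟨continuous_const, fun n σ hσ i hi => by simp [dist_nonneg]⟩, by simp⟩
  -- upper bound on the admissible set
  have hub : ∀ x ∈ limitSet w p (closure V), ∀ y ∈ limitSet w p (closure V),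
      ∀ t ∈ {t | ∃ f : EuclideanSpace ℝ (Fin N) → ℝ,
        DiracAdmissible w p x₀ f ∧ t = |f x - f y|}, t ≤ 2 * (D * (1 - c)⁻¹) := by
    rintro x hx y hy t ⟨f, hf, rfl⟩
    calc |f x - f y| ≤ |f x - f x₀| + |f x₀ - f y| := abs_sub_le _ _ _
    _ ≤ D * (1 - c)⁻¹ + D * (1 - c)⁻¹ := by
        refine add_le_add (hfx₀ f hf x hx) ?_
        rw [abs_sub_comm]
        exact hfx₀ f hf y hy
    _ = 2 * (D * (1 - c)⁻¹) := by ring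
  have hbdd : ∀ x ∈ limitSet w p (closure V), ∀ y ∈ limitSet w p (closure V),
      BddAbove {t | ∃ f : EuclideanSpace ℝ (Fin N) → ℝ,
        DiracAdmissible w p x₀ f ∧ t = |f x - f y|} :=
    fun x hx y hy => ⟨2 * (D * (1 - c)⁻¹), fun t ht => hub x hx y hy t ht⟩
  -- Part 1
  have part1 : ∀ x ∈ limitSet w p (closure V), ∀ y ∈ limitSet w p (closure V),
      dist x y ≤ connesDist w p x₀ x y := by
    intro x hx y hy
    apply le_csSup (hbdd x hx y hy)
    refine ⟨fun z => dist z y, ⟨by fun_prop, fun n σ hσ i hi => abs_dist_sub_le _ _ _⟩, ?_⟩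
    simp [abs_of_nonneg dist_nonneg]
  refine ⟨part1, ?_⟩
  intro x hx u hu
  constructor
  · -- Euclidean convergence implies Connes convergence
    intro hdist
    rw [Metric.tendsto_atTop]
    intro ε hε
    have hBm : Tendsto (fun m : ℕ => 2 * (D * c ^ m * (1 - c)⁻¹)) atTop (nhds 0) := by
      have h := (((tendsto_pow_atTop_nhds_zero_of_lt_one hc0.le hc1).const_mul D).mul_const
        (1 - c)⁻¹).const_mul 2
      simpa using h
    obtain ⟨m, hm⟩ := (hBm.eventually (gt_mem_nhds hε)).exists
    choose ωu hωuv hωuc using fun n => hword (u n) (hu n)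
    set Em : (Fin m → ℕ) → Set (EuclideanSpace ℝ (Fin N)) :=
      fun r => ⋂ j, Dlev w p (closure V) r j with hEm
    have hEmclosed : ∀ r, IsClosed (Em r) :=
      fun r => isClosed_iInter fun j => isClosed_Dlev hsim hlam hVbdd r j
    set Bad : Finset (Fin m → ℕ) :=
      (Fintype.piFinset fun k : Fin m => Finset.range (p k)).filter
        (fun r => x ∉ Em r ∧ (Em r).Nonempty) with hBad
    have hδex : ∃ δ > (0:ℝ), ∀ r ∈ Bad, δ ≤ Metric.infDist x (Em r) := by
      by_cases h : Bad.Nonempty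
      · refine ⟨Bad.inf' h (fun r => Metric.infDist x (Em r)), ?_,
          fun r hr => Finset.inf'_le _ hr⟩
        rw [gt_iff_lt, Finset.lt_inf'_iff]
        intro r hr
        obtain ⟨h1, h2⟩ := (Finset.mem_filter.mp hr).2
        exact ((hEmclosed r).notMem_iff_infDist_pos h2).mp h1
      · exact ⟨1, one_pos, fun r hr => absurd ⟨r, hr⟩ h⟩
    obtain ⟨δ, hδ0, hδle⟩ := hδex
    rw [Metric.tendsto_atTop] at hdist
    obtain ⟨Nn, hNn⟩ := hdist δ hδ0
    refine ⟨Nn, fun n hn => ?_⟩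
    have hduxn : dist (u n) x < δ := by
      have := hNn n hn
      rwa [Real.dist_eq, sub_zero, abs_of_nonneg dist_nonneg] at this
    have hun_mem : u n ∈ Em (fun k : Fin m => ωu n k) :=
      Set.mem_iInter.mpr fun j => Set.mem_iUnion.mpr
        ⟨ωu n, Set.mem_iUnion.mpr ⟨⟨hωuv n, fun k => rfl⟩, hωuc n j⟩⟩
    have hx_mem : x ∈ Em (fun k : Fin m => ωu n k) := by
      by_contra hxn
      have hrn_pi : (fun k : Fin m => ωu n k) ∈
          Fintype.piFinset fun k : Fin m => Finset.range (p k) := by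
        simp only [Fintype.mem_piFinset, Finset.mem_range]
        exact fun k => hωuv n k
      have hbadmem : (fun k : Fin m => ωu n k) ∈ Bad :=
        Finset.mem_filter.mpr ⟨hrn_pi, hxn, ⟨u n, hun_mem⟩⟩
      have h1 := (hδle _ hbadmem).trans (Metric.infDist_le_dist_of_mem hun_mem)
      rw [dist_comm] at h1
      linarith
    have hypx : ∀ j, ∃ ω : ℕ → ℕ, (∀ k, ω k < p k) ∧
        (∀ k : Fin m, ω (k:ℕ) = ωu n k) ∧ x ∈ cellOf w (closure V) ω j := by
      intro j
      have hj := Set.mem_iInter.mp hx_mem j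
      simp only [Dlev, Set.mem_iUnion] at hj
      obtain ⟨ω, ⟨h1, h2⟩, h3⟩ := hj
      exact ⟨ω, h1, h2, h3⟩
    obtain ⟨ωx, hωxv, hωxm, hωxc⟩ := konig hp hsim hlam hmaps x m
      (fun k : Fin m => ωu n k) hypx
    have hcd_le : connesDist w p x₀ (u n) x ≤ 2 * (D * c ^ m * (1 - c)⁻¹) := by
      apply csSup_le ⟨0, h0mem _ _⟩
      rintro t ⟨f, hf, rfl⟩
      have h1 := hCB f hf (u n) (ωu n) (hωuv n) (hωuc n) m
      have h2 := hCB f hf x ωx hωxv hωxc m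
      have heq : compWord w m (fun k : Fin m => ωu n (k:ℕ)) x₀ =
          compWord w m (fun k : Fin m => ωx (k:ℕ)) x₀ := by
        congr 1
        funext k
        exact (hωxm k).symm
      calc |f (u n) - f x|
          ≤ |f (u n) - f (compWord w m (fun k : Fin m => ωu n (k:ℕ)) x₀)| +
            |f (compWord w m (fun k : Fin m => ωu n (k:ℕ)) x₀) - f x| := abs_sub_le _ _ _
      _ ≤ D * c ^ m * (1 - c)⁻¹ + D * c ^ m * (1 - c)⁻¹ := by
          refine add_le_add h1 ?_
          rw [abs_sub_comm, heq]
          exact h2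
      _ = 2 * (D * c ^ m * (1 - c)⁻¹) := by ring
    have hcd_nonneg : 0 ≤ connesDist w p x₀ (u n) x :=
      le_csSup (hbdd (u n) (hu n) x hx) (h0mem _ _)
    rw [Real.dist_eq, sub_zero, abs_of_nonneg hcd_nonneg]
    exact lt_of_le_of_lt hcd_le hm
  · -- Connes convergence implies Euclidean convergence
    intro hconn
    exact squeeze_zero (fun n => dist_nonneg) (fun n => part1 (u n) (hu n) x hx) hconn
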